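/- For every n ≥ 0, the Riemann–Liouville half-derivative of √(1+t)·U_n(t) satisfies d/dx[(1/√π)∫_{−1}^x √(1+t)·U_n(t)(x−t)^{−1/2} dt] = (√π/2)·(C_n^{(3/2)}(x) + C_{n−1}^{(3/2)}(x)) for x ∈ (−1,1), where C_{−1}^{(3/2)} = 0. -/

import Mathlib

open Real intervalIntegral

/-- Ultraspherical (Gegenbauer) polynomials via the three-term recurrence
`(n+1) C_{n+1} = 2(n+λ) x C_n − (n+2λ−1) C_{n−1}`, `C_0 = 1`, `C_{-1} = 0`. -/
noncomputable def Geg (l : ℝ) : ℕ → ℝ → ℝ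
  | 0, _ => 1
  | 1, x => 2 * l * x
  | (n + 2), x =>
      (2 * ((n : ℝ) + 1 + l) * x * Geg l (n + 1) x
        - ((n : ℝ) + 2 * l) * Geg l n x) / ((n : ℝ) + 2)

/-- Ultraspherical polynomials with integer index, zero for negative index. -/
noncomputable def GegZ (l : ℝ) (n : ℤ) (x : ℝ) : ℝ :=
  if 0 ≤ n then Geg l n.toNat x else 0

open Finset MeasureTheory Set

lemma Geg_rec (l : ℝ) (n : ℕ) (x : ℝ) :
    Geg l (n+2) x = (2 * ((n : ℝ) + 1 + l) * x * Geg l (n + 1) x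
        - ((n : ℝ) + 2 * l) * Geg l n x) / ((n : ℝ) + 2) := rfl

lemma Geg_rec' (l : ℝ) (n : ℕ) (x : ℝ) :
    ((n : ℝ) + 2) * Geg l (n+2) x = 2 * ((n : ℝ) + 1 + l) * x * Geg l (n + 1) x
        - ((n : ℝ) + 2 * l) * Geg l n x := by
  rw [Geg_rec]; field_simp

lemma nat2 {P : ℕ → Prop} (h0 : P 0) (h1 : P 1) (h : ∀ n, P n → P (n+1) → P (n+2)) :
    ∀ n, P n := by
  have key : ∀ n, P n ∧ P (n+1) := by
    intro n
    induction n with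
    | zero => exact ⟨h0, h1⟩
    | succ k ih => exact ⟨ih.2, h k ih.1 ih.2⟩
  exact fun n => (key n).1

lemma Geg_zero (l : ℝ) (x : ℝ) : Geg l 0 x = 1 := rfl
lemma Geg_one (l : ℝ) (x : ℝ) : Geg l 1 x = 2 * l * x := rfl

/-- `(2m+5) P_{m+2} = C_{m+2} - C_m` (Legendre vs Gegenbauer-3/2). -/
lemma Bst : ∀ m : ℕ, ∀ x : ℝ, (2*(m:ℝ)+5) * Geg (1/2) (m+2) x
    = Geg (3/2) (m+2) x - Geg (3/2) m x := by
  refine nat2 ?_ ?_ ?_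
  · intro x
    norm_num [Geg]; ring
  · intro x
    norm_num [Geg]; ring
  · intro m ih1 ih2 x
    have h0 : ((m:ℝ)+4)*(2*(m:ℝ)+5) ≠ 0 := by positivity
    have R1 := Geg_rec' (1/2) (m+2) x
    have R2 := Geg_rec' (3/2) (m+2) x
    have R3 := Geg_rec' (3/2) m x
    have H1 := ih1 x
    have H2 := ih2 x
    push_cast at R1 R2 R3 H1 H2 ⊢
    rw [show m+2+2 = m+4 from rfl] at R1 R2
    rw [show m+2+1 = m+3 from rfl] at R1 R2
    rw [show m+1+2 = m+3 from rfl] at H2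
    apply mul_left_cancel₀ h0
    linear_combination ((2*(m:ℝ)+5)*(2*(m:ℝ)+9)) * R1 - (2*(m:ℝ)+5) * R2
      + (2*(m:ℝ)+9) * R3 - ((2*(m:ℝ)+9)*((m:ℝ)+3)) * H1
      + ((2*(m:ℝ)+5)*(2*(m:ℝ)+9)*x) * H2

/-- Legendre at -1. -/
lemma Pm1 : ∀ n : ℕ, Geg (1/2) n (-1) = (-1)^n := by
  refine nat2 ?_ ?_ ?_
  · norm_num [Geg]
  · norm_num [Geg]
  · intro n ih1 ih2
    rw [Geg_rec, ih1, ih2]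
    have h2 : ((n:ℝ)+2) ≠ 0 := by positivity
    field_simp
    ring

noncomputable def rr : ℕ → ℝ
  | 0 => 1
  | (k+1) => rr k * (2*(k:ℝ)+3)/(2*(k:ℝ)+2)

lemma rr_pos : ∀ k, 0 < rr k := by
  intro k; induction k with
  | zero => norm_num [rr]
  | succ j ih =>
    show 0 < rr j * (2*(j:ℝ)+3)/(2*(j:ℝ)+2)
    positivity

noncomputable def aa : ℕ → ℕ → ℝ
  | 0, 0 => 1
  | 0, _+1 => 0
  | 1, 0 => -2
  | 1, 1 => 2
  | 1, (_+2) => 0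
  | (n+2), 0 => -2 * aa (n+1) 0 - aa n 0
  | (n+2), (k+1) => 2 * aa (n+1) k - 2 * aa (n+1) (k+1) - aa n (k+1)

lemma aa_vanish : ∀ n k, n < k → aa n k = 0 := by
  refine nat2 ?_ ?_ ?_
  · intro k hk
    match k, hk with
    | (j+1), _ => rfl
  · intro k hk
    match k, hk with
    | (j+2), _ => rfl
  · intro n ih1 ih2 k hk
    match k, hk with
    | (j+1), hk =>
      show 2 * aa (n+1) j - 2 * aa (n+1) (j+1) - aa n (j+1) = 0
      rw [ih2 j (by omega), ih2 (j+1) (by omega), ih1 (j+1) (by omega)]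
      ring

/-- extend/truncate summation range for `aa`-weighted sums -/
lemma sum_ext (n N : ℕ) (h : n+1 ≤ N) (w : ℕ → ℝ) :
    ∑ k ∈ range N, aa n k * w k = ∑ k ∈ range (n+1), aa n k * w k := by
  symm
  apply Finset.sum_subset
  · exact Finset.range_subset_range.2 h
  · intro k _ hk
    rw [aa_vanish n k (by simpa using hk)]
    ring

lemma sum_shift (f g : ℕ → ℝ) (N : ℕ) (h0 : f 0 = 0) (hs : ∀ k, f (k+1) = g k) (u : ℝ) :
    ∑ k ∈ range (N+1), f k * u^k = u * ∑ k ∈ range N, g k * u^k := by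
  rw [Finset.sum_range_succ', h0, Finset.mul_sum]
  simp only [hs, pow_zero, zero_mul, add_zero]
  exact Finset.sum_congr rfl fun i _ => by ring

/-- Expansion of the Chebyshev U in powers of (1+x). -/
lemma Ueq : ∀ n, ∀ x : ℝ, Geg 1 n x = ∑ k ∈ range (n+1), aa n k * (1+x)^k := by
  refine nat2 ?_ ?_ ?_
  · intro x; show (1:ℝ) = _
    norm_num [aa]
  · intro x; show 2*(1:ℝ)*x = _
    rw [show (1:ℕ)+1 = 2 from rfl, Finset.sum_range_succ, Finset.sum_range_one]
    show 2*(1:ℝ)*x = aa 1 0 * (1+x)^0 + aa 1 1 * (1+x)^1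
    show 2*(1:ℝ)*x = (-2) * (1+x)^0 + 2 * (1+x)^1
    ring
  · intro n ih1 ih2 x
    symm
    have h2 : ((n:ℝ)+2) ≠ 0 := by positivity
    have hrec : Geg 1 (n+2) x = 2*x*Geg 1 (n+1) x - Geg 1 n x := by
      rw [Geg_rec]; field_simp; ring
    have hsplit : ∀ k, aa (n+2) k = (aa (n+2) k + 2*aa (n+1) k + aa n k) - 2*aa (n+1) k - aa n k := by
      intro k; ring
    have hF0 : aa (n+2) 0 + 2*aa (n+1) 0 + aa n 0 = 0 := by
      show (-2 * aa (n+1) 0 - aa n 0) + 2*aa (n+1) 0 + aa n 0 = 0; ring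
    have hFs : ∀ k, aa (n+2) (k+1) + 2*aa (n+1) (k+1) + aa n (k+1) = 2 * aa (n+1) k := by
      intro k
      show (2 * aa (n+1) k - 2 * aa (n+1) (k+1) - aa n (k+1)) + 2*aa (n+1) (k+1) + aa n (k+1) = _
      ring
    calc ∑ k ∈ range (n+3), aa (n+2) k * (1+x)^k
        = ∑ k ∈ range (n+3), ((aa (n+2) k + 2*aa (n+1) k + aa n k) * (1+x)^k
            - 2*(aa (n+1) k * (1+x)^k) - aa n k * (1+x)^k) := by
          exact Finset.sum_congr rfl fun k _ => by ring
      _ = (∑ k ∈ range (n+3), (aa (n+2) k + 2*aa (n+1) k + aa n k) * (1+x)^k)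
            - 2*(∑ k ∈ range (n+3), aa (n+1) k * (1+x)^k)
            - ∑ k ∈ range (n+3), aa n k * (1+x)^k := by
          rw [Finset.sum_sub_distrib, Finset.sum_sub_distrib, Finset.mul_sum]
      _ = (1+x) * (∑ k ∈ range (n+2), 2 * aa (n+1) k * (1+x)^k)
            - 2*(∑ k ∈ range (n+2), aa (n+1) k * (1+x)^k)
            - ∑ k ∈ range (n+1), aa n k * (1+x)^k := by
          rw [sum_shift _ (fun k => 2 * aa (n+1) k) (n+2) hF0 hFs,
            sum_ext (n+1) (n+3) (by omega), sum_ext n (n+3) (by omega)]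
      _ = 2*x*Geg 1 (n+1) x - Geg 1 n x := by
          rw [← ih2 x, ← ih1 x]
          have : (∑ k ∈ range (n+2), 2 * aa (n+1) k * (1+x)^k)
              = 2 * ∑ k ∈ range (n+2), aa (n+1) k * (1+x)^k := by
            rw [Finset.mul_sum]; exact Finset.sum_congr rfl fun k _ => by ring
          rw [this, ← ih2 x]
          ring
      _ = Geg 1 (n+2) x := hrec.symm

/-- Derivative of Legendre: P'_{n+1} = C_n^{3/2}. -/
lemma Dlem : ∀ n : ℕ, ∀ x : ℝ, HasDerivAt (fun y => Geg (1/2) (n+1) y) (Geg (3/2) n x) x := by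
  refine nat2 ?_ ?_ ?_
  · intro x
    have h : (fun y => Geg (1/2) (0+1) y) = fun y : ℝ => 2*(1/2)*y := by
      funext y; exact Geg_one _ _
    rw [h, Geg_zero]
    simpa using (hasDerivAt_id x).const_mul (2*(1/2) : ℝ)
  · intro x
    have h : (fun y => Geg (1/2) (1+1) y) = fun y : ℝ =>
        (2*((0:ℕ):ℝ)+3)/2 * (y*y) - 1/2 := by
      funext y
      show Geg (1/2) 2 y = _
      norm_num [Geg]; ring
    rw [h]
    have h2 : HasDerivAt (fun y : ℝ => (2*((0:ℕ):ℝ)+3)/2 * (y*y) - 1/2)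
        ((2*((0:ℕ):ℝ)+3)/2 * (1*x + x*1)) x :=
      (((hasDerivAt_id' x).mul (hasDerivAt_id' x)).const_mul _).sub_const _
    convert h2 using 1
    norm_num [Geg]; ring
  · intro n ih1 ih2 x
    have hfun : (fun y => Geg (1/2) (n+2+1) y) = fun y =>
        (2*((n:ℝ)+1+1+1/2)*y*Geg (1/2) (n+2) y - ((n:ℝ)+1+2*(1/2))*Geg (1/2) (n+1) y)
          / ((n:ℝ)+1+2) := by
      funext y
      show Geg (1/2) (n+1+2) y = _
      rw [Geg_rec (1/2) (n+1) y]
      push_cast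
      ring
    rw [hfun]
    have hlin : HasDerivAt (fun y : ℝ => 2*((n:ℝ)+1+1+1/2)*y) (2*((n:ℝ)+1+1+1/2)) x := by
      simpa using (hasDerivAt_id x).const_mul (2*((n:ℝ)+1+1+1/2))
    have hmul : HasDerivAt (fun y : ℝ => 2*((n:ℝ)+1+1+1/2)*y*Geg (1/2) (n+2) y)
        (2*((n:ℝ)+1+1+1/2) * Geg (1/2) (n+2) x
          + 2*((n:ℝ)+1+1+1/2)*x * Geg (3/2) (n+1) x) x := hlin.mul (ih2 x)
    have hsub : HasDerivAt (fun y : ℝ =>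
        2*((n:ℝ)+1+1+1/2)*y*Geg (1/2) (n+2) y - ((n:ℝ)+1+2*(1/2))*Geg (1/2) (n+1) y)
        (2*((n:ℝ)+1+1+1/2) * Geg (1/2) (n+2) x
          + 2*((n:ℝ)+1+1+1/2)*x * Geg (3/2) (n+1) x
          - ((n:ℝ)+1+2*(1/2)) * Geg (3/2) n x) x := hmul.sub ((ih1 x).const_mul _)
    have hdiv := hsub.div_const ((n:ℝ)+1+2)
    refine HasDerivAt.congr_deriv hdiv ?_
    symm
    -- need: C_{n+2} = (A*P₂ + A x C₁ − (n+2) C₀)/(n+3),  A = 2n+5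
    have hB := Bst n x
    have hC := Geg_rec' (3/2) n x
    have h3 : ((n:ℝ)+1+2) ≠ 0 := by positivity
    rw [eq_div_iff h3]
    linear_combination hC - hB

/-- `W_n = C_n^{3/2} + C_{n-1}^{3/2}` (with `C_{-1}=0`). -/
noncomputable def Wf : ℕ → ℝ → ℝ
  | 0, x => Geg (3/2) 0 x
  | (m+1), x => Geg (3/2) (m+1) x + Geg (3/2) m x

lemma I1 : ∀ n : ℕ, ∀ x : ℝ, Wf (n+2) x = 2*x*Wf (n+1) x - Wf n x
    + (Geg (1/2) (n+2) x + Geg (1/2) (n+1) x) := by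
  intro n
  match n with
  | 0 =>
    intro x
    show Geg (3/2) 2 x + Geg (3/2) 1 x = 2*x*(Geg (3/2) 1 x + Geg (3/2) 0 x) - Geg (3/2) 0 x
      + (Geg (1/2) 2 x + Geg (1/2) 1 x)
    norm_num [Geg]; ring
  | (m+1) =>
    intro x
    show Geg (3/2) (m+3) x + Geg (3/2) (m+2) x
      = 2*x*(Geg (3/2) (m+2) x + Geg (3/2) (m+1) x) - (Geg (3/2) (m+1) x + Geg (3/2) m x)
      + (Geg (1/2) (m+3) x + Geg (1/2) (m+2) x)
    have h0 : ((2*(m:ℝ)+5)*(2*(m:ℝ)+7)) ≠ 0 := by positivity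
    have L1a := Bst (m+1) x
    have L1b := Bst m x
    have RA := Geg_rec' (3/2) (m+1) x
    have RB := Geg_rec' (3/2) m x
    push_cast at L1a L1b RA RB
    rw [show m+1+2 = m+3 from rfl] at L1a RA
    rw [show m+1+1 = m+2 from rfl] at RA
    apply mul_left_cancel₀ h0
    linear_combination (-(2*(m:ℝ)+5)) * L1a - (2*(m:ℝ)+7) * L1b
      + (2*(2*(m:ℝ)+5)) * RA + (2*(2*(m:ℝ)+7)) * RB

lemma Tlem (m : ℕ)
    (hi : ∀ x : ℝ, Wf m x = ∑ k ∈ range (m+1), aa m k * rr k * (1+x)^k) :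
    ∀ x : ℝ, Geg (1/2) (m+1) x + Geg (1/2) m x
      = ∑ k ∈ range (m+1), aa m k * rr k * ((1+x)^(k+1)/((k:ℝ)+1)) := by
  set g : ℝ → ℝ := fun x => Geg (1/2) (m+1) x + Geg (1/2) m x
      - ∑ k ∈ range (m+1), aa m k * rr k * ((1+x)^(k+1)/((k:ℝ)+1)) with hg
  have hder : ∀ x : ℝ, HasDerivAt g 0 x := by
    intro x
    have h1 : HasDerivAt (fun y => Geg (1/2) (m+1) y + Geg (1/2) m y) (Wf m x) x := by
      match m with
      | 0 =>
        have := (Dlem 0 x).add_const (Geg (1/2) 0 x)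
        have he : (fun y => Geg (1/2) (0+1) y + Geg (1/2) 0 x)
            = (fun y => Geg (1/2) (0+1) y + Geg (1/2) 0 y) := by
          funext y; rw [Geg_zero, Geg_zero]
        rw [he] at this
        exact this
      | (j+1) => exact (Dlem (j+1) x).add (Dlem j x)
    have h2 : HasDerivAt (fun y => ∑ k ∈ range (m+1), aa m k * rr k * ((1+y)^(k+1)/((k:ℝ)+1)))
        (∑ k ∈ range (m+1), aa m k * rr k * (1+x)^k) x := by
      have hsum : HasDerivAt (fun y => ∑ k ∈ range (m+1), aa m k * rr k * ((1+y)^(k+1)/((k:ℝ)+1)))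
          (∑ k ∈ range (m+1), aa m k * rr k * (((k:ℝ)+1) * (1+x)^(k+1-1) * 1 / ((k:ℝ)+1))) x := by
        apply HasDerivAt.fun_sum
        intro k _
        have hpow : HasDerivAt (fun y : ℝ => (1+y)^(k+1)) (((k:ℝ)+1) * (1+x)^(k+1-1) * 1) x := by
          have := ((hasDerivAt_id x).const_add 1).pow (k+1)
          push_cast at this ⊢
          exact this
        exact (hpow.div_const _).const_mul _
      convert hsum using 1
      apply Finset.sum_congr rfl
      intro k _
      have : ((k:ℝ)+1) ≠ 0 := by positivity
      field_simp
      rw [Nat.add_sub_cancel]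
    have := h1.sub h2
    rw [hi x, sub_self] at this
    exact this
  have hconst : ∀ x : ℝ, g x = g (-1) :=
    fun x => is_const_of_deriv_eq_zero (fun y => (hder y).differentiableAt)
      (fun y => (hder y).deriv) x (-1)
  have hgm1 : g (-1) = 0 := by
    rw [hg]
    simp only [Pm1]
    have hz : ∀ k ∈ range (m+1), aa m k * rr k * ((1+(-1:ℝ))^(k+1)/((k:ℝ)+1)) = 0 := by
      intro k _
      rw [show (1:ℝ)+(-1) = 0 by ring, zero_pow (Nat.succ_ne_zero k)]
      ring
    rw [Finset.sum_congr rfl hz]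
    simp [pow_succ]
  intro x
  have := hconst x
  rw [hgm1, hg] at this
  linarith [this]

/-- Main algebraic identity. -/
lemma Sid : ∀ n : ℕ, ∀ x : ℝ, Wf n x = ∑ k ∈ range (n+1), aa n k * rr k * (1+x)^k := by
  refine nat2 ?_ ?_ ?_
  · intro x
    show Geg (3/2) 0 x = _
    norm_num [Geg, aa, rr]
  · intro x
    show Geg (3/2) 1 x + Geg (3/2) 0 x = _
    rw [Finset.sum_range_succ, Finset.sum_range_one]
    show 2*(3/2)*x + 1 = aa 1 0 * rr 0 * (1+x)^0 + aa 1 1 * rr 1 * (1+x)^1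
    show 2*(3/2)*x + 1 = (-2) * rr 0 * (1+x)^0 + 2 * rr 1 * (1+x)^1
    norm_num [rr]
    ring
  · intro n ih1 ih2 x
    symm
    have hF0 : (aa (n+2) 0 + 2*aa (n+1) 0 + aa n 0) * rr 0 = 0 := by
      show ((-2 * aa (n+1) 0 - aa n 0) + 2*aa (n+1) 0 + aa n 0) * rr 0 = 0; ring
    have hFs : ∀ k, (aa (n+2) (k+1) + 2*aa (n+1) (k+1) + aa n (k+1)) * rr (k+1)
        = 2 * aa (n+1) k * rr (k+1) := by
      intro k
      show ((2 * aa (n+1) k - 2 * aa (n+1) (k+1) - aa n (k+1)) + 2*aa (n+1) (k+1) + aa n (k+1))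
        * rr (k+1) = _
      ring
    have hrr : ∀ k : ℕ, rr (k+1) = rr k * (2*(k:ℝ)+3)/(2*(k:ℝ)+2) := fun k => rfl
    calc ∑ k ∈ range (n+3), aa (n+2) k * rr k * (1+x)^k
        = (∑ k ∈ range (n+3), ((aa (n+2) k + 2*aa (n+1) k + aa n k) * rr k) * (1+x)^k)
            - 2*(∑ k ∈ range (n+3), aa (n+1) k * (rr k * (1+x)^k))
            - ∑ k ∈ range (n+3), aa n k * (rr k * (1+x)^k) := by
          rw [Finset.mul_sum, ← Finset.sum_sub_distrib, ← Finset.sum_sub_distrib]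
          exact Finset.sum_congr rfl fun k _ => by ring
      _ = (1+x) * (∑ k ∈ range (n+2), (2 * aa (n+1) k * rr (k+1)) * (1+x)^k)
            - 2*(∑ k ∈ range (n+2), aa (n+1) k * (rr k * (1+x)^k))
            - ∑ k ∈ range (n+1), aa n k * (rr k * (1+x)^k) := by
          rw [sum_shift _ (fun k => 2 * aa (n+1) k * rr (k+1)) (n+2) hF0 hFs,
            sum_ext (n+1) (n+3) (by omega), sum_ext n (n+3) (by omega)]
      _ = 2*x*(∑ k ∈ range (n+2), aa (n+1) k * rr k * (1+x)^k)
            - (∑ k ∈ range (n+1), aa n k * rr k * (1+x)^k)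
            + ∑ k ∈ range (n+2), aa (n+1) k * rr k * ((1+x)^(k+1)/((k:ℝ)+1)) := by
          have key : ∀ k ∈ range (n+2), (1+x)*((2*aa (n+1) k * rr (k+1)) * (1+x)^k)
              = 2*(aa (n+1) k * (rr k * (1+x)^k)) + (2*x*(aa (n+1) k * rr k * (1+x)^k)
                + aa (n+1) k * rr k * ((1+x)^(k+1)/((k:ℝ)+1))) := by
            intro k _
            have hk : ((k:ℝ)+1) ≠ 0 := by positivity
            have hk2 : (2*(k:ℝ)+2) ≠ 0 := by positivity
            rw [hrr k]
            field_simp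
            ring
          rw [Finset.mul_sum, Finset.sum_congr rfl key, Finset.sum_add_distrib,
            Finset.sum_add_distrib, ← Finset.mul_sum, ← Finset.mul_sum]
          have hD : ∑ k ∈ range (n+1), aa n k * (rr k * (1+x)^k)
              = ∑ k ∈ range (n+1), aa n k * rr k * (1+x)^k :=
            Finset.sum_congr rfl fun k _ => by ring
          rw [hD]
          ring
      _ = 2*x*Wf (n+1) x - Wf n x + (Geg (1/2) (n+2) x + Geg (1/2) (n+1) x) := by
          have hT := Tlem (n+1) ih2 x
          have hI2 := ih2 x
          rw [show n+1+1 = n+2 from rfl] at hT hI2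
          rw [← hI2, ← ih1 x, ← hT]
      _ = Wf (n+2) x := (I1 n x).symm


lemma Geg_cont (l : ℝ) : ∀ n, Continuous (fun x => Geg l n x) := by
  refine nat2 ?_ ?_ ?_
  · exact continuous_const
  · show Continuous fun x : ℝ => 2 * l * x
    fun_prop
  · intro n ih1 ih2
    show Continuous fun x : ℝ => (2 * ((n : ℝ) + 1 + l) * x * Geg l (n + 1) x
        - ((n : ℝ) + 2 * l) * Geg l n x) / ((n : ℝ) + 2)
    apply Continuous.div_const
    exact ((continuous_const.mul continuous_id).mul ih2).sub (continuous_const.mul ih1)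

/-- Trigonometric substitution for the fractional integral. -/
lemma subst_lemma (n : ℕ) (y : ℝ) (hy : -1 < y) :
    (∫ t in (-1:ℝ)..y, Real.sqrt (1 + t) * Geg 1 n t / Real.sqrt (y - t))
      = ∫ θ in (0:ℝ)..(π/2), 2*(1+y)*sin θ^2 * Geg 1 n (-1 + (1+y)*sin θ^2) := by
  have hy0 : (0:ℝ) < 1 + y := by linarith
  set f : ℝ → ℝ := fun θ => -1 + (1+y)*sin θ^2 with hf
  set f' : ℝ → ℝ := fun θ => (1+y)*(2*sin θ^1*cos θ) with hf'
  have hder : ∀ θ ∈ Ioo (0:ℝ) (π/2), HasDerivWithinAt f (f' θ) (Ioo (0:ℝ) (π/2)) θ := by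
    intro θ _
    exact ((((Real.hasDerivAt_sin θ).pow 2).const_mul (1+y)).const_add (-1)).hasDerivWithinAt
  have hmono : StrictMonoOn f (Ioo (0:ℝ) (π/2)) := by
    intro a ha b hb hab
    have hsa : 0 ≤ sin a := sin_nonneg_of_nonneg_of_le_pi ha.1.le
      (by have := pi_pos; nlinarith [ha.2])
    have hs : sin a < sin b := by
      apply Real.strictMonoOn_sin ⟨by nlinarith [pi_pos, ha.1], by nlinarith [ha.2, hb.2]⟩
        ⟨by nlinarith [pi_pos, hb.1], hb.2.le⟩ hab
    have : sin a^2 < sin b^2 := by nlinarith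
    simp only [hf]
    nlinarith
  have hinj : InjOn f (Ioo (0:ℝ) (π/2)) := hmono.injOn
  have himg : f '' (Ioo (0:ℝ) (π/2)) = Ioo (-1:ℝ) y := by
    apply Set.eq_of_subset_of_subset
    · rintro t ⟨θ, hθ, rfl⟩
      have h1 : 0 < sin θ := sin_pos_of_pos_of_lt_pi hθ.1 (by nlinarith [pi_pos, hθ.2])
      have h2 : 0 < cos θ := cos_pos_of_mem_Ioo ⟨by nlinarith [pi_pos, hθ.1], hθ.2⟩
      have h3 : sin θ^2 + cos θ^2 = 1 := sin_sq_add_cos_sq θ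
      constructor
      · simp only [hf]
        have := mul_pos hy0 (pow_pos h1 2)
        linarith
      · simp only [hf]
        have hlt : sin θ^2 < 1 := by nlinarith
        have := mul_lt_mul_of_pos_left hlt hy0
        linarith
    · intro t ht
      set s : ℝ := (1+t)/(1+y) with hs
      have hs0 : 0 < s := by apply div_pos <;> linarith [ht.1, ht.2]
      have hs1 : s < 1 := by
        rw [hs, div_lt_one hy0]; linarith [ht.2]
      refine ⟨Real.arcsin (Real.sqrt s), ⟨?_, ?_⟩, ?_⟩
      · exact Real.arcsin_pos.2 (Real.sqrt_pos.2 hs0)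
      · exact Real.arcsin_lt_pi_div_two.2 (by
          rw [show (1:ℝ) = Real.sqrt 1 by simp]
          exact Real.sqrt_lt_sqrt hs0.le hs1)
      · simp only [hf]
        rw [Real.sin_arcsin (by linarith [Real.sqrt_nonneg s]) (by
            rw [show (1:ℝ) = Real.sqrt 1 by simp]
            exact Real.sqrt_le_sqrt hs1.le)]
        rw [Real.sq_sqrt hs0.le, hs]
        field_simp
        ring
  have key := MeasureTheory.integral_image_eq_integral_abs_deriv_smul measurableSet_Ioo
    hder hinj (fun t => Real.sqrt (1 + t) * Geg 1 n t / Real.sqrt (y - t))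
  rw [himg] at key
  rw [intervalIntegral.integral_of_le hy.le, MeasureTheory.integral_Ioc_eq_integral_Ioo, key]
  rw [intervalIntegral.integral_of_le (by positivity : (0:ℝ) ≤ π/2),
    MeasureTheory.integral_Ioc_eq_integral_Ioo]
  apply MeasureTheory.setIntegral_congr_fun measurableSet_Ioo
  intro θ hθ
  have h1 : 0 < sin θ := sin_pos_of_pos_of_lt_pi hθ.1 (by nlinarith [pi_pos, hθ.2])
  have h2 : 0 < cos θ := cos_pos_of_mem_Ioo ⟨by nlinarith [pi_pos, hθ.1], hθ.2⟩
  have h3 : sin θ^2 + cos θ^2 = 1 := sin_sq_add_cos_sq θ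
  have e1 : 1 + f θ = (1+y) * sin θ^2 := by simp only [hf]; ring
  have e2 : y - f θ = (1+y) * cos θ^2 := by simp only [hf]; nlinarith
  have hsq : Real.sqrt (1 + f θ) = Real.sqrt (1+y) * sin θ := by
    rw [e1, Real.sqrt_mul hy0.le, Real.sqrt_sq h1.le]
  have hsq2 : Real.sqrt (y - f θ) = Real.sqrt (1+y) * cos θ := by
    rw [e2, Real.sqrt_mul hy0.le, Real.sqrt_sq h2.le]
  have habs : |f' θ| = (1+y)*(2*sin θ^1*cos θ) := by
    simp only [hf']
    apply abs_of_pos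
    positivity
  show |f' θ| • (Real.sqrt (1 + f θ) * Geg 1 n (f θ) / Real.sqrt (y - f θ))
    = 2*(1+y)*sin θ^2 * Geg 1 n (-1 + (1+y)*sin θ^2)
  rw [smul_eq_mul, habs, hsq, hsq2]
  have hsπ : Real.sqrt (1+y) ≠ 0 := by positivity
  have : Geg 1 n (f θ) = Geg 1 n (-1 + (1+y)*sin θ^2) := rfl
  rw [this]
  field_simp

lemma Jval : ∀ k : ℕ, (∫ θ in (0:ℝ)..(π/2), sin θ^(2*k+2)) = π * rr k / (4*((k:ℝ)+1)) := by
  intro k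
  induction k with
  | zero =>
    norm_num [integral_sin_sq, rr]
    ring
  | succ j ih =>
    rw [show 2*(j+1)+2 = 2*j+2+2 by ring]
    rw [integral_sin_pow (2*j+2)]
    rw [ih]
    rw [Real.sin_zero, Real.cos_pi_div_two]
    rw [show rr (j+1) = rr j * (2*(j:ℝ)+3)/(2*(j:ℝ)+2) from rfl]
    have h1 : ((j:ℝ)+1) ≠ 0 := by positivity
    have h2 : ((j:ℝ)+2) ≠ 0 := by positivity
    have h3 : (2*(j:ℝ)+2) ≠ 0 := by positivity
    push_cast
    rw [zero_pow (by omega), zero_mul, mul_zero]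
    norm_num
    field_simp
    ring

lemma Feval (m : ℕ) (y : ℝ) (hy : -1 < y) :
    (∫ t in (-1:ℝ)..y, Real.sqrt (1 + t) * Geg 1 m t / Real.sqrt (y - t))
      = ∑ k ∈ range (m+1), aa m k * rr k * (π * (1+y)^(k+1) / (2*((k:ℝ)+1))) := by
  rw [subst_lemma m y hy]
  have hptw : ∀ θ : ℝ, 2*(1+y)*sin θ^2 * Geg 1 m (-1 + (1+y)*sin θ^2)
      = ∑ k ∈ range (m+1), aa m k * (2*(1+y)^(k+1)) * sin θ^(2*k+2) := by
    intro θ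
    have h0 : Geg 1 m (-1 + (1+y)*sin θ^2)
        = ∑ k ∈ range (m+1), aa m k * ((1+y)*sin θ^2)^k := by
      rw [Ueq m]
      simp only [show ∀ z:ℝ, 1 + (-1 + z) = z from fun z => by ring]
    rw [h0, Finset.mul_sum]
    apply Finset.sum_congr rfl
    intro k _
    rw [show 2*k+2 = 2*(k+1) by ring, pow_mul, mul_pow]
    ring
  rw [intervalIntegral.integral_congr (fun θ _ => hptw θ)]
  rw [intervalIntegral.integral_finset_sum
    (fun k _ => (Continuous.intervalIntegrable (by fun_prop) _ _))]
  apply Finset.sum_congr rfl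
  intro k _
  rw [intervalIntegral.integral_const_mul, Jval k]
  have h1 : ((k:ℝ)+1) ≠ 0 := by positivity
  field_simp
  ring

theorem stmt11 (n : ℤ) (hn : 0 ≤ n) (x : ℝ) (hx : x ∈ Set.Ioo (-1 : ℝ) 1) :
    HasDerivAt
      (fun y => (1 / Real.sqrt π) *
        ∫ t in (-1 : ℝ)..y, Real.sqrt (1 + t) * GegZ 1 n t / Real.sqrt (y - t))
      (Real.sqrt π / 2 * (GegZ (3/2) n x + GegZ (3/2) (n - 1) x)) x := by
  obtain ⟨m, rfl⟩ := Int.eq_ofNat_of_zero_le hn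
  have hsπ : Real.sqrt π ≠ 0 := by positivity
  have hππ : Real.sqrt π * Real.sqrt π = π := Real.mul_self_sqrt pi_pos.le
  -- the integrand uses Geg 1 m
  have hGz : ∀ t : ℝ, GegZ 1 (m:ℤ) t = Geg 1 m t := by
    intro t
    simp [GegZ]
  simp only [hGz]
  -- the polynomial model
  set ψ : ℝ → ℝ := fun y => (1 / Real.sqrt π) *
    ∑ k ∈ range (m+1), aa m k * rr k * (π * (1+y)^(k+1) / (2*((k:ℝ)+1))) with hψ
  have hev : (fun y => (1 / Real.sqrt π) *
      ∫ t in (-1 : ℝ)..y, Real.sqrt (1 + t) * Geg 1 m t / Real.sqrt (y - t)) =ᶠ[nhds x] ψ := by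
    filter_upwards [isOpen_Ioi.mem_nhds (show x ∈ Ioi (-1:ℝ) from hx.1)] with y hy
    rw [hψ, Feval m y hy]
  -- derivative of the polynomial model
  have hder : HasDerivAt ψ
      ((1 / Real.sqrt π) * ∑ k ∈ range (m+1),
        aa m k * rr k * (π * (((k:ℝ)+1) * (1+x)^(k+1-1) * 1) / (2*((k:ℝ)+1)))) x := by
    apply HasDerivAt.const_mul
    apply HasDerivAt.fun_sum
    intro k _
    have hpow : HasDerivAt (fun y : ℝ => (1+y)^(k+1))
        (((k:ℝ)+1) * (1+x)^(k+1-1) * 1) x := by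
      have := ((hasDerivAt_id x).const_add 1).pow (k+1)
      push_cast at this ⊢
      exact this
    exact ((hpow.const_mul π).div_const _).const_mul _
  -- identify the derivative value
  have hval : (1 / Real.sqrt π) * (∑ k ∈ range (m+1),
      aa m k * rr k * (π * (((k:ℝ)+1) * (1+x)^(k+1-1) * 1) / (2*((k:ℝ)+1))))
      = Real.sqrt π / 2 * (GegZ (3/2) (m:ℤ) x + GegZ (3/2) ((m:ℤ) - 1) x) := by
    have hsum : ∀ k ∈ range (m+1),
        aa m k * rr k * (π * (((k:ℝ)+1) * (1+x)^(k+1-1) * 1) / (2*((k:ℝ)+1)))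
        = (Real.sqrt π * Real.sqrt π / 2) * (aa m k * rr k * (1+x)^k) := by
      intro k _
      have h1 : ((k:ℝ)+1) ≠ 0 := by positivity
      rw [hππ, Nat.add_sub_cancel]
      field_simp
    rw [Finset.sum_congr rfl hsum, ← Finset.mul_sum, ← Sid m x]
    have hW : Wf m x = GegZ (3/2) (m:ℤ) x + GegZ (3/2) ((m:ℤ) - 1) x := by
      match m with
      | 0 =>
        show Geg (3/2) 0 x = _
        norm_num [GegZ]
      | (j+1) =>
        show Geg (3/2) (j+1) x + Geg (3/2) j x = _
        have e1 : ((j+1:ℕ):ℤ) - 1 = (j:ℕ) := by push_cast; ring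
        rw [e1]
        have hz : ∀ (i : ℕ), GegZ (3/2) ((i:ℕ):ℤ) x = Geg (3/2) i x := fun i => by simp [GegZ]
        rw [hz, hz]
    rw [hW]
    generalize (GegZ (3/2) (m:ℤ) x + GegZ (3/2) ((m:ℤ)-1) x) = W
    field_simp
  rw [← hval]
  exact hder.congr_of_eventuallyEq hev
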